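/- Suppose n ≥ 2 and r ≥ 2, and fix m ∈ {1, …, n}. Let T_m = ∑_{l=1}^r S_l ρ_m(l). Then E[T_m²] = (r(r² − 1)/12)·(1 + (r−2)/n), and in particular E[T_m²] ≤ (r³/12)·(1 + r/n). -/

import Mathlib

open MeasureTheory Finset Real

noncomputable section

instance instMSPerm (r : ℕ) : MeasurableSpace (Equiv.Perm (Fin r)) := ⊤

/-- The joint law of `n` independent uniformly random permutations of `{1, …, r}`:
the uniform probability measure on the finite product space. -/
def friedmanMeasure (n r : ℕ) : Measure (Fin n → Equiv.Perm (Fin r)) :=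
  (PMF.uniformOfFintype (Fin n → Equiv.Perm (Fin r))).toMeasure

/-- `ρ_i(j) = π_i(j) - (r+1)/2`, where `π_i(j) ∈ {1, …, r}` is the rank assigned by the
`i`-th permutation to treatment `j` (a permutation of `Fin r` assigns values in `{0, …, r-1}`,
hence the `+ 1`). -/
def rho (n r : ℕ) (i : Fin n) (j : Fin r) (ω : Fin n → Equiv.Perm (Fin r)) : ℝ :=
  ((ω i j : ℕ) : ℝ) + 1 - ((r : ℝ) + 1) / 2

/-- `S_j = (√12/√(r(r+1)n)) ∑_{i=1}^n ρ_i(j)`. -/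
def Sstat (n r : ℕ) (j : Fin r) (ω : Fin n → Equiv.Perm (Fin r)) : ℝ :=
  Real.sqrt 12 / Real.sqrt ((r : ℝ) * ((r : ℝ) + 1) * (n : ℝ)) * ∑ i, rho n r i j ω

/-- Friedman's statistic `F_r = ∑_{j=1}^r S_j²`. -/
def friedman (n r : ℕ) (ω : Fin n → Equiv.Perm (Fin r)) : ℝ :=
  ∑ j, (Sstat n r j ω) ^ 2

/-- The chi-square distribution with `p` degrees of freedom: the Gamma distribution
with shape `p/2` and rate `1/2`. -/
def chiSq (p : ℕ) : Measure ℝ := ProbabilityTheory.gammaMeasure ((p : ℝ) / 2) (1 / 2)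

end


noncomputable section AuxGR

/-- centered rank function -/
def fr (r : ℕ) (p : Equiv.Perm (Fin r)) (l : Fin r) : ℝ :=
  ((p l : ℕ) : ℝ) + 1 - ((r : ℝ) + 1) / 2

lemma sum_cast1 (r : ℕ) : ∑ k ∈ range r, ((k : ℝ) + 1) = (r : ℝ) * (r + 1) / 2 := by
  induction r with
  | zero => simp
  | succ t ih => rw [Finset.sum_range_succ, ih]; push_cast; ring

lemma sum_cast2 (r : ℕ) :
    ∑ k ∈ range r, ((k : ℝ) + 1) ^ 2 = (r : ℝ) * (r + 1) * (2 * r + 1) / 6 := by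
  induction r with
  | zero => simp
  | succ t ih => rw [Finset.sum_range_succ, ih]; push_cast; ring

lemma fr_sum (r : ℕ) (p : Equiv.Perm (Fin r)) : ∑ l, fr r p l = 0 := by
  have h := Equiv.sum_comp p (fun l : Fin r => ((l : ℕ) : ℝ) + 1 - ((r : ℝ) + 1) / 2)
  unfold fr
  rw [h, Finset.sum_sub_distrib, Finset.sum_const, Fin.sum_univ_eq_sum_range
    (fun k => ((k : ℝ) + 1)), sum_cast1]
  simp only [card_univ, Fintype.card_fin, nsmul_eq_mul]
  ring

lemma fr_sq_sum (r : ℕ) (p : Equiv.Perm (Fin r)) :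
    ∑ l, (fr r p l) ^ 2 = r * ((r : ℝ) ^ 2 - 1) / 12 := by
  have h := Equiv.sum_comp p
    (fun l : Fin r => (((l : ℕ) : ℝ) + 1 - ((r : ℝ) + 1) / 2) ^ 2)
  unfold fr
  rw [h, Fin.sum_univ_eq_sum_range (fun k => (((k : ℝ) + 1) - ((r : ℝ) + 1) / 2) ^ 2)]
  have expand : ∀ k ∈ range r, (((k : ℝ) + 1) - ((r : ℝ) + 1) / 2) ^ 2
      = ((k : ℝ) + 1) ^ 2 - (((r : ℝ) + 1)) * ((k : ℝ) + 1) + (((r : ℝ) + 1) / 2) ^ 2 := by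
    intros; ring
  rw [Finset.sum_congr rfl expand, Finset.sum_add_distrib, Finset.sum_sub_distrib,
    ← Finset.mul_sum, sum_cast1, sum_cast2, Finset.sum_const, Finset.card_range,
    nsmul_eq_mul]
  ring

lemma perm_sum_comp (r : ℕ) (g : Equiv.Perm (Fin r) → ℝ) (e : Equiv.Perm (Fin r)) :
    ∑ p : Equiv.Perm (Fin r), g (p * e) = ∑ p : Equiv.Perm (Fin r), g p :=
  Fintype.sum_bijective (· * e) (Group.mulRight_bijective e) _ _ (fun _ => rfl)

lemma sum_apply_eq (r : ℕ) (g : Fin r → ℝ) (j j' : Fin r) :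
    ∑ p : Equiv.Perm (Fin r), g (p j) = ∑ p : Equiv.Perm (Fin r), g (p j') := by
  have h := perm_sum_comp r (fun p => g (p j)) (Equiv.swap j j')
  simp only [Equiv.Perm.mul_apply, Equiv.swap_apply_left] at h
  exact h.symm

lemma sum_apply2_eq (r : ℕ) (g : Fin r → Fin r → ℝ) (l j j' : Fin r)
    (hj : j ≠ l) (hj' : j' ≠ l) :
    ∑ p : Equiv.Perm (Fin r), g (p l) (p j)
      = ∑ p : Equiv.Perm (Fin r), g (p l) (p j') := by
  have h := perm_sum_comp r (fun p => g (p l) (p j)) (Equiv.swap j j')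
  simp only [Equiv.Perm.mul_apply, Equiv.swap_apply_left,
    Equiv.swap_apply_of_ne_of_ne (Ne.symm hj) (Ne.symm hj')] at h
  exact h.symm

lemma Q0 (r : ℕ) (hr : 1 ≤ r) (l : Fin r) :
    ∑ p : Equiv.Perm (Fin r), fr r p l = 0 := by
  have hconst : ∀ j : Fin r, ∑ p : Equiv.Perm (Fin r), fr r p j
      = ∑ p : Equiv.Perm (Fin r), fr r p l := fun j =>
    sum_apply_eq r (fun x => ((x : ℕ) : ℝ) + 1 - ((r : ℝ) + 1) / 2) j l
  have htot : ∑ j : Fin r, ∑ p : Equiv.Perm (Fin r), fr r p j = 0 := by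
    rw [Finset.sum_comm]
    simp [fr_sum]
  rw [Finset.sum_congr rfl (fun j _ => hconst j), Finset.sum_const, card_univ,
    Fintype.card_fin, nsmul_eq_mul] at htot
  have hrne : (r : ℝ) ≠ 0 := by positivity
  exact (mul_eq_zero.mp htot).resolve_left hrne

lemma Qdiag (r : ℕ) (hr : 1 ≤ r) (l : Fin r) :
    ∑ p : Equiv.Perm (Fin r), (fr r p l) ^ 2
      = (r.factorial : ℝ) * ((r : ℝ) ^ 2 - 1) / 12 := by
  have hconst : ∀ j : Fin r, ∑ p : Equiv.Perm (Fin r), (fr r p j) ^ 2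
      = ∑ p : Equiv.Perm (Fin r), (fr r p l) ^ 2 := fun j =>
    sum_apply_eq r (fun x => (((x : ℕ) : ℝ) + 1 - ((r : ℝ) + 1) / 2) ^ 2) j l
  have htot : ∑ j : Fin r, ∑ p : Equiv.Perm (Fin r), (fr r p j) ^ 2
      = (r.factorial : ℝ) * (r * ((r : ℝ) ^ 2 - 1) / 12) := by
    rw [Finset.sum_comm]
    simp only [fr_sq_sum, Finset.sum_const, card_univ, Fintype.card_perm,
      Fintype.card_fin, nsmul_eq_mul]
  rw [Finset.sum_congr rfl (fun j _ => hconst j), Finset.sum_const, card_univ,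
    Fintype.card_fin, nsmul_eq_mul] at htot
  have hrne : (r : ℝ) ≠ 0 := by positivity
  field_simp at htot ⊢
  have hc := mul_left_cancel₀ hrne (show (r : ℝ) * ((∑ p : Equiv.Perm (Fin r), fr r p l ^ 2) * 12)
    = (r : ℝ) * ((r.factorial : ℝ) * ((r : ℝ) ^ 2 - 1)) by rw [htot])
  linarith

lemma Qoff (r : ℕ) (hr : 2 ≤ r) (l l' : Fin r) (h : l' ≠ l) :
    ∑ p : Equiv.Perm (Fin r), fr r p l * fr r p l'
      = -((r.factorial : ℝ) * ((r : ℝ) + 1) / 12) := by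
  have hr1 : 1 ≤ r := le_trans (by norm_num) hr
  have hconst : ∀ j : Fin r, j ≠ l →
      ∑ p : Equiv.Perm (Fin r), fr r p l * fr r p j
        = ∑ p : Equiv.Perm (Fin r), fr r p l * fr r p l' := by
    intro j hj
    exact sum_apply2_eq r
      (fun x y => (((x : ℕ) : ℝ) + 1 - ((r : ℝ) + 1) / 2)
        * (((y : ℕ) : ℝ) + 1 - ((r : ℝ) + 1) / 2)) l j l' hj h
  have htot : ∑ j : Fin r, ∑ p : Equiv.Perm (Fin r), fr r p l * fr r p j = 0 := by
    rw [Finset.sum_comm]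
    have hz : ∀ p : Equiv.Perm (Fin r),
        ∑ j : Fin r, fr r p l * fr r p j = 0 := by
      intro p; rw [← Finset.mul_sum, fr_sum]; ring
    simp [hz]
  rw [← Finset.add_sum_erase _ _ (Finset.mem_univ l)] at htot
  have herase : ∑ j ∈ Finset.univ.erase l,
      ∑ p : Equiv.Perm (Fin r), fr r p l * fr r p j
      = ((r : ℝ) - 1) * ∑ p : Equiv.Perm (Fin r), fr r p l * fr r p l' := by
    rw [Finset.sum_congr rfl (fun j hj => hconst j (Finset.mem_erase.mp hj).1),
      Finset.sum_const, Finset.card_erase_of_mem (Finset.mem_univ l), card_univ,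
      Fintype.card_fin, nsmul_eq_mul]
    congr 1
    have h1 : (1 : ℕ) ≤ r := hr1
    push_cast [Nat.cast_sub h1]
    ring
  have hd : ∑ p : Equiv.Perm (Fin r), fr r p l * fr r p l
      = (r.factorial : ℝ) * ((r : ℝ) ^ 2 - 1) / 12 := by
    have := Qdiag r hr1 l
    simpa [pow_two] using this
  rw [herase, hd] at htot
  have hrne : (r : ℝ) - 1 ≠ 0 := by
    have : (2 : ℝ) ≤ r := by exact_mod_cast hr
    linarith
  have key : ((r : ℝ) - 1) * ∑ p : Equiv.Perm (Fin r), fr r p l * fr r p l'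
      = ((r : ℝ) - 1) * -((r.factorial : ℝ) * ((r : ℝ) + 1) / 12) := by
    have expand : ((r : ℝ) - 1) * -((r.factorial : ℝ) * ((r : ℝ) + 1) / 12)
        = -((r.factorial : ℝ) * ((r : ℝ) ^ 2 - 1) / 12) := by ring
    rw [expand]; linarith
  exact mul_left_cancel₀ hrne key



/-- `A(p, t) = ∑ l, fr p l * fr t l` -/
def Af (r : ℕ) (p t : Equiv.Perm (Fin r)) : ℝ := ∑ l, fr r p l * fr r t l

lemma Af_diag (r : ℕ) (p : Equiv.Perm (Fin r)) :
    Af r p p = r * ((r : ℝ) ^ 2 - 1) / 12 := by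
  have := fr_sq_sum r p
  simpa [Af, pow_two] using this

/-- expansion of `A(p,t)²` -/
lemma Af_sq_expand (r : ℕ) (p t : Equiv.Perm (Fin r)) :
    (Af r p t) ^ 2 = ∑ l : Fin r, ∑ l' : Fin r,
      (fr r p l * fr r p l') * (fr r t l * fr r t l') := by
  rw [pow_two, Af, Finset.sum_mul_sum]
  exact Finset.sum_congr rfl fun l _ => Finset.sum_congr rfl fun l' _ => by ring

/-- expansion of `A(p,t) * A(q,t)` -/
lemma Af_mul_expand (r : ℕ) (p q t : Equiv.Perm (Fin r)) :
    Af r p t * Af r q t = ∑ l : Fin r, ∑ l' : Fin r,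
      fr r p l * fr r q l' * (fr r t l * fr r t l') := by
  rw [Af, Af, Finset.sum_mul_sum]
  exact Finset.sum_congr rfl fun l _ => Finset.sum_congr rfl fun l' _ => by ring

/-- `∑_{l,l'} Q(l,l')²` -/
lemma Qf_sq_sum (r : ℕ) (hr : 2 ≤ r) :
    ∑ l : Fin r, ∑ l' : Fin r,
        (∑ p : Equiv.Perm (Fin r), fr r p l * fr r p l')
          * (∑ t : Equiv.Perm (Fin r), fr r t l * fr r t l')
      = (r : ℝ) * ((r.factorial : ℝ) * ((r : ℝ) ^ 2 - 1) / 12) ^ 2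
        + (r : ℝ) * ((r : ℝ) - 1) * ((r.factorial : ℝ) * ((r : ℝ) + 1) / 12) ^ 2 := by
  have hr1 : 1 ≤ r := le_trans (by norm_num) hr
  have hsplit : ∀ l : Fin r, ∑ l' : Fin r,
      (∑ p : Equiv.Perm (Fin r), fr r p l * fr r p l')
        * ∑ t : Equiv.Perm (Fin r), fr r t l * fr r t l'
      = ((r.factorial : ℝ) * ((r : ℝ) ^ 2 - 1) / 12) ^ 2
        + ((r : ℝ) - 1) * ((r.factorial : ℝ) * ((r : ℝ) + 1) / 12) ^ 2 := by
    intro l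
    rw [← Finset.add_sum_erase _ _ (Finset.mem_univ l)]
    have hdl : ∑ p : Equiv.Perm (Fin r), fr r p l * fr r p l
        = (r.factorial : ℝ) * ((r : ℝ) ^ 2 - 1) / 12 := by
      simpa [pow_two] using Qdiag r hr1 l
    have hoffl : ∀ l' ∈ Finset.univ.erase l,
        (∑ p : Equiv.Perm (Fin r), fr r p l * fr r p l')
          * ∑ t : Equiv.Perm (Fin r), fr r t l * fr r t l'
        = ((r.factorial : ℝ) * ((r : ℝ) + 1) / 12) ^ 2 := by
      intro l' hl'
      rw [Qoff r hr l l' (Finset.mem_erase.mp hl').1]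
      ring
    rw [Finset.sum_congr rfl hoffl, hdl, Finset.sum_const,
      Finset.card_erase_of_mem (Finset.mem_univ l), card_univ, Fintype.card_fin,
      nsmul_eq_mul, Nat.cast_sub hr1]
    push_cast
    ring
  rw [Finset.sum_congr rfl fun l _ => hsplit l, Finset.sum_const, card_univ,
    Fintype.card_fin, nsmul_eq_mul]
  ring

section PiSums

variable {n : ℕ} {G : Type*} [Fintype G] [DecidableEq (Fin n)]

/-- basic product-of-sums identity over function spaces -/
lemma pi_sum_prod (g : Fin n → G → ℝ) :
    ∑ w : Fin n → G, ∏ i, g i (w i) = ∏ i, ∑ x : G, g i x :=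
  (Fintype.prod_sum g).symm

lemma pi_sum_two {i m : Fin n} (him : i ≠ m) (u v : G → ℝ) :
    ∑ w : Fin n → G, u (w i) * v (w m)
      = (Fintype.card G : ℝ) ^ (n - 2) * ((∑ x : G, u x) * ∑ x : G, v x) := by
  classical
  set g : Fin n → G → ℝ := fun j x => if j = i then u x else if j = m then v x else 1 with hg
  have hpt : ∀ w : Fin n → G, u (w i) * v (w m) = ∏ j, g j (w j) := by
    intro w
    rw [← Finset.mul_prod_erase _ _ (Finset.mem_univ i),
      ← Finset.mul_prod_erase _ _ (Finset.mem_erase.mpr ⟨Ne.symm him, Finset.mem_univ m⟩)]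
    have h1 : ∏ j ∈ (Finset.univ.erase i).erase m, g j (w j) = 1 := by
      refine Finset.prod_eq_one fun j hj => ?_
      have h' := Finset.mem_erase.mp hj
      have hji := (Finset.mem_erase.mp h'.2).1
      simp [hg, hji, h'.1]
    rw [h1]
    simp [hg, Ne.symm him]
  simp_rw [hpt]
  rw [pi_sum_prod]
  rw [← Finset.mul_prod_erase _ _ (Finset.mem_univ i),
    ← Finset.mul_prod_erase _ _ (Finset.mem_erase.mpr ⟨Ne.symm him, Finset.mem_univ m⟩)]
  have h1 : ∏ j ∈ (Finset.univ.erase i).erase m, (∑ x : G, g j x)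
      = (Fintype.card G : ℝ) ^ (n - 2) := by
    have heach : ∀ j ∈ (Finset.univ.erase i).erase m, (∑ x : G, g j x) = (Fintype.card G : ℝ) := by
      intro j hj
      have h' := Finset.mem_erase.mp hj
      have hji := (Finset.mem_erase.mp h'.2).1
      simp [hg, hji, h'.1, Finset.card_univ]
    rw [Finset.prod_congr rfl heach, Finset.prod_const,
      Finset.card_erase_of_mem (Finset.mem_erase.mpr ⟨Ne.symm him, Finset.mem_univ m⟩),
      Finset.card_erase_of_mem (Finset.mem_univ i), card_univ, Fintype.card_fin]
    congr 1
  rw [h1]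
  have hgi : (∑ x : G, g i x) = ∑ x : G, u x := by simp [hg]
  have hgm : (∑ x : G, g m x) = ∑ x : G, v x := by simp [hg, Ne.symm him]
  rw [hgi, hgm]
  ring

lemma pi_sum_three {i i' m : Fin n} (hii' : i ≠ i') (him : i ≠ m) (hi'm : i' ≠ m)
    (u v w : G → ℝ) :
    ∑ f : Fin n → G, u (f i) * v (f i') * w (f m)
      = (Fintype.card G : ℝ) ^ (n - 3)
        * ((∑ x : G, u x) * (∑ x : G, v x) * ∑ x : G, w x) := by
  classical
  set g : Fin n → G → ℝ :=
    fun j x => if j = i then u x else if j = i' then v x else if j = m then w x else 1 with hg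
  have hmmem : m ∈ (Finset.univ.erase i).erase i' :=
    Finset.mem_erase.mpr ⟨Ne.symm hi'm, Finset.mem_erase.mpr ⟨Ne.symm him, Finset.mem_univ m⟩⟩
  have hi'mem : i' ∈ Finset.univ.erase i :=
    Finset.mem_erase.mpr ⟨Ne.symm hii', Finset.mem_univ i'⟩
  have hpt : ∀ f : Fin n → G, u (f i) * v (f i') * w (f m) = ∏ j, g j (f j) := by
    intro f
    rw [← Finset.mul_prod_erase _ _ (Finset.mem_univ i),
      ← Finset.mul_prod_erase _ _ hi'mem,
      ← Finset.mul_prod_erase _ _ hmmem]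
    have h1 : ∏ j ∈ ((Finset.univ.erase i).erase i').erase m, g j (f j) = 1 := by
      refine Finset.prod_eq_one fun j hj => ?_
      have h' := Finset.mem_erase.mp hj
      have h'' := Finset.mem_erase.mp h'.2
      have h''' := Finset.mem_erase.mp h''.2
      simp [hg, h'.1, h''.1, h'''.1]
    rw [h1]
    simp [hg, Ne.symm hii', Ne.symm him, Ne.symm hi'm]
    ring
  simp_rw [hpt]
  rw [pi_sum_prod]
  rw [← Finset.mul_prod_erase _ _ (Finset.mem_univ i),
    ← Finset.mul_prod_erase _ _ hi'mem,
    ← Finset.mul_prod_erase _ _ hmmem]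
  have h1 : ∏ j ∈ ((Finset.univ.erase i).erase i').erase m, (∑ x : G, g j x)
      = (Fintype.card G : ℝ) ^ (n - 3) := by
    have heach : ∀ j ∈ ((Finset.univ.erase i).erase i').erase m,
        (∑ x : G, g j x) = (Fintype.card G : ℝ) := by
      intro j hj
      have h' := Finset.mem_erase.mp hj
      have h'' := Finset.mem_erase.mp h'.2
      have h''' := Finset.mem_erase.mp h''.2
      simp [hg, h'.1, h''.1, h'''.1, Finset.card_univ]
    rw [Finset.prod_congr rfl heach, Finset.prod_const,
      Finset.card_erase_of_mem hmmem, Finset.card_erase_of_mem hi'mem,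
      Finset.card_erase_of_mem (Finset.mem_univ i), card_univ, Fintype.card_fin]
    congr 1
  rw [h1]
  have hgi : (∑ x : G, g i x) = ∑ x : G, u x := by simp [hg]
  have hgi' : (∑ x : G, g i' x) = ∑ x : G, v x := by simp [hg, Ne.symm hii']
  have hgm : (∑ x : G, g m x) = ∑ x : G, w x := by
    simp [hg, Ne.symm him, Ne.symm hi'm]
  rw [hgi, hgi', hgm]
  ring

end PiSums

section Main

instance instMSCPerm (r : ℕ) : MeasurableSingletonClass (Equiv.Perm (Fin r)) :=
  ⟨fun _ => MeasurableSpace.measurableSet_top⟩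

lemma friedman_singleton (n r : ℕ) (ω : Fin n → Equiv.Perm (Fin r)) :
    ((friedmanMeasure n r) {ω}).toReal = ((r.factorial : ℝ) ^ n)⁻¹ := by
  classical
  rw [friedmanMeasure, PMF.toMeasure_apply_singleton _ _ (measurableSet_singleton ω),
    PMF.uniformOfFintype_apply, ENNReal.toReal_inv]
  rw [Fintype.card_fun, Fintype.card_perm, Fintype.card_fin, Fintype.card_fin]
  push_cast
  norm_num

lemma sum_Af (n r : ℕ) (hr1 : 1 ≤ r) {i m : Fin n} (hi : i ≠ m) :
    ∑ ω : Fin n → Equiv.Perm (Fin r), Af r (ω i) (ω m) = 0 := by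
  classical
  have h1 : ∑ ω : Fin n → Equiv.Perm (Fin r), Af r (ω i) (ω m)
      = ∑ l : Fin r, ∑ ω : Fin n → Equiv.Perm (Fin r), fr r (ω i) l * fr r (ω m) l := by
    simp only [Af]
    exact Finset.sum_comm
  rw [h1]
  refine Finset.sum_eq_zero fun l _ => ?_
  rw [pi_sum_two hi (fun x => fr r x l) (fun x => fr r x l), Q0 r hr1 l]
  ring

lemma sum_Af_sq (n r : ℕ) (hr : 2 ≤ r) {i m : Fin n} (hi : i ≠ m) :
    ∑ ω : Fin n → Equiv.Perm (Fin r), (Af r (ω i) (ω m)) ^ 2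
      = (r.factorial : ℝ) ^ (n - 2)
        * ((r : ℝ) * ((r.factorial : ℝ) * ((r : ℝ) ^ 2 - 1) / 12) ^ 2
          + (r : ℝ) * ((r : ℝ) - 1) * ((r.factorial : ℝ) * ((r : ℝ) + 1) / 12) ^ 2) := by
  classical
  have h1 : ∑ ω : Fin n → Equiv.Perm (Fin r), (Af r (ω i) (ω m)) ^ 2
      = ∑ l : Fin r, ∑ l' : Fin r, ∑ ω : Fin n → Equiv.Perm (Fin r),
          (fr r (ω i) l * fr r (ω i) l') * (fr r (ω m) l * fr r (ω m) l') := by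
    simp_rw [Af_sq_expand]
    rw [Finset.sum_comm]
    exact Finset.sum_congr rfl fun l _ => Finset.sum_comm
  rw [h1]
  have h2 : ∀ l l' : Fin r, ∑ ω : Fin n → Equiv.Perm (Fin r),
      (fr r (ω i) l * fr r (ω i) l') * (fr r (ω m) l * fr r (ω m) l')
      = (r.factorial : ℝ) ^ (n - 2)
        * ((∑ p : Equiv.Perm (Fin r), fr r p l * fr r p l')
          * (∑ t : Equiv.Perm (Fin r), fr r t l * fr r t l')) := by
    intro l l'
    rw [pi_sum_two hi (fun x => fr r x l * fr r x l') (fun x => fr r x l * fr r x l'),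
      Fintype.card_perm, Fintype.card_fin]
  simp_rw [h2, ← Finset.mul_sum]
  rw [Qf_sq_sum r hr]

lemma sum_Af_mul (n r : ℕ) (hr1 : 1 ≤ r) {i i' m : Fin n} (hii' : i ≠ i') (him : i ≠ m)
    (hi'm : i' ≠ m) :
    ∑ ω : Fin n → Equiv.Perm (Fin r), Af r (ω i) (ω m) * Af r (ω i') (ω m) = 0 := by
  classical
  have h1 : ∑ ω : Fin n → Equiv.Perm (Fin r), Af r (ω i) (ω m) * Af r (ω i') (ω m)
      = ∑ l : Fin r, ∑ l' : Fin r, ∑ ω : Fin n → Equiv.Perm (Fin r),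
          fr r (ω i) l * fr r (ω i') l' * (fr r (ω m) l * fr r (ω m) l') := by
    simp_rw [Af_mul_expand]
    rw [Finset.sum_comm]
    exact Finset.sum_congr rfl fun l _ => Finset.sum_comm
  rw [h1]
  refine Finset.sum_eq_zero fun l _ => Finset.sum_eq_zero fun l' _ => ?_
  rw [pi_sum_three hii' him hi'm (fun x => fr r x l) (fun x => fr r x l')
    (fun x => fr r x l * fr r x l'), Q0 r hr1 l]
  ring

lemma Tm_second_moment_eq (n r : ℕ) (hn : 2 ≤ n) (hr : 2 ≤ r) (m : Fin n) :
    ∫ ω, (∑ l, Sstat n r l ω * rho n r m l ω) ^ 2 ∂(friedmanMeasure n r)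
      = (r : ℝ) * ((r : ℝ) ^ 2 - 1) / 12 * (1 + ((r : ℝ) - 2) / (n : ℝ)) := by
  classical
  have hr1 : 1 ≤ r := by omega
  have hn1 : 1 ≤ n := by omega
  have hpt : ∀ ω : Fin n → Equiv.Perm (Fin r),
      (∑ l, Sstat n r l ω * rho n r m l ω) ^ 2
        = 12 / ((r : ℝ) * ((r : ℝ) + 1) * (n : ℝ))
            * (∑ i, Af r (ω i) (ω m)) ^ 2 := by
    intro ω
    have hlin : ∑ l, Sstat n r l ω * rho n r m l ω
        = Real.sqrt 12 / Real.sqrt ((r : ℝ) * ((r : ℝ) + 1) * (n : ℝ))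
          * ∑ i, Af r (ω i) (ω m) := by
      calc ∑ l, Sstat n r l ω * rho n r m l ω
          = ∑ l, (Real.sqrt 12 / Real.sqrt ((r : ℝ) * ((r : ℝ) + 1) * (n : ℝ))
              * ∑ i, fr r (ω i) l) * fr r (ω m) l := rfl
        _ = Real.sqrt 12 / Real.sqrt ((r : ℝ) * ((r : ℝ) + 1) * (n : ℝ))
            * ∑ l, ∑ i, fr r (ω i) l * fr r (ω m) l := by
            rw [Finset.mul_sum]
            exact Finset.sum_congr rfl fun l _ => by
              rw [mul_assoc, Finset.sum_mul]
        _ = Real.sqrt 12 / Real.sqrt ((r : ℝ) * ((r : ℝ) + 1) * (n : ℝ))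
            * ∑ i, Af r (ω i) (ω m) := by
            rw [Finset.sum_comm]
            rfl
    rw [hlin, mul_pow, div_pow, Real.sq_sqrt (by norm_num : (0:ℝ) ≤ 12),
      Real.sq_sqrt (by positivity)]
  haveI : IsProbabilityMeasure (friedmanMeasure n r) := by
    unfold friedmanMeasure; infer_instance
  have hint := integral_fintype (μ := friedmanMeasure n r)
    (f := fun ω => (∑ l, Sstat n r l ω * rho n r m l ω) ^ 2) Integrable.of_finite
  rw [hint]
  simp_rw [measureReal_def, friedman_singleton n r, hpt, smul_eq_mul]
  rw [← Finset.mul_sum, ← Finset.mul_sum]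
  -- compute the big sum
  set s : Finset (Fin n) := Finset.univ.erase m with hs
  have hims : ∀ i ∈ s, i ≠ m := fun i hi => (Finset.mem_erase.mp hi).1
  have hBsplit : ∀ ω : Fin n → Equiv.Perm (Fin r),
      ∑ i, Af r (ω i) (ω m) = (r : ℝ) * ((r : ℝ) ^ 2 - 1) / 12
        + ∑ i ∈ s, Af r (ω i) (ω m) := by
    intro ω
    rw [← Finset.add_sum_erase _ _ (Finset.mem_univ m), Af_diag]
  have e1 : ∑ _ω : Fin n → Equiv.Perm (Fin r), ((r : ℝ) * ((r : ℝ) ^ 2 - 1) / 12) ^ 2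
      = (r.factorial : ℝ) ^ n * ((r : ℝ) * ((r : ℝ) ^ 2 - 1) / 12) ^ 2 := by
    rw [Finset.sum_const, card_univ, Fintype.card_fun, Fintype.card_perm,
      Fintype.card_fin, Fintype.card_fin, nsmul_eq_mul]
    push_cast
    ring
  have e2 : ∑ ω : Fin n → Equiv.Perm (Fin r),
      (2 * ((r : ℝ) * ((r : ℝ) ^ 2 - 1) / 12)) * ∑ i ∈ s, Af r (ω i) (ω m) = 0 := by
    rw [← Finset.mul_sum, Finset.sum_comm,
      Finset.sum_eq_zero fun i hi => sum_Af n r hr1 (hims i hi), mul_zero]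
  have e3 : ∑ ω : Fin n → Equiv.Perm (Fin r),
      (∑ i ∈ s, Af r (ω i) (ω m)) * (∑ i' ∈ s, Af r (ω i') (ω m))
      = ((n : ℝ) - 1) * ((r.factorial : ℝ) ^ (n - 2)
        * ((r : ℝ) * ((r.factorial : ℝ) * ((r : ℝ) ^ 2 - 1) / 12) ^ 2
          + (r : ℝ) * ((r : ℝ) - 1) * ((r.factorial : ℝ) * ((r : ℝ) + 1) / 12) ^ 2)) := by
    have expand : ∀ ω : Fin n → Equiv.Perm (Fin r),
        (∑ i ∈ s, Af r (ω i) (ω m)) * (∑ i' ∈ s, Af r (ω i') (ω m))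
        = ∑ i ∈ s, ∑ i' ∈ s, Af r (ω i) (ω m) * Af r (ω i') (ω m) := fun ω =>
      Finset.sum_mul_sum s s _ _
    simp_rw [expand]
    rw [Finset.sum_comm]
    have inner : ∀ i ∈ s, ∑ ω : Fin n → Equiv.Perm (Fin r),
        ∑ i' ∈ s, Af r (ω i) (ω m) * Af r (ω i') (ω m)
        = (r.factorial : ℝ) ^ (n - 2)
          * ((r : ℝ) * ((r.factorial : ℝ) * ((r : ℝ) ^ 2 - 1) / 12) ^ 2
            + (r : ℝ) * ((r : ℝ) - 1) * ((r.factorial : ℝ) * ((r : ℝ) + 1) / 12) ^ 2) := by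
      intro i hi
      rw [Finset.sum_comm]
      rw [← Finset.add_sum_erase _ _ hi]
      have hz : ∑ i' ∈ s.erase i, ∑ ω : Fin n → Equiv.Perm (Fin r),
          Af r (ω i) (ω m) * Af r (ω i') (ω m) = 0 := by
        refine Finset.sum_eq_zero fun i' hi' => ?_
        have h1 : i' ≠ i := (Finset.mem_erase.mp hi').1
        have h2 : i' ∈ s := (Finset.mem_erase.mp hi').2
        exact sum_Af_mul n r hr1 (Ne.symm h1) (hims i hi) (hims i' h2)
      rw [hz, add_zero]
      have : ∑ ω : Fin n → Equiv.Perm (Fin r), Af r (ω i) (ω m) * Af r (ω i) (ω m)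
          = ∑ ω : Fin n → Equiv.Perm (Fin r), (Af r (ω i) (ω m)) ^ 2 := by
        exact Finset.sum_congr rfl fun ω _ => (pow_two _).symm
      rw [this, sum_Af_sq n r hr (hims i hi)]
    rw [Finset.sum_congr rfl inner, Finset.sum_const, nsmul_eq_mul]
    have hcards : s.card = n - 1 := by
      rw [hs, Finset.card_erase_of_mem (Finset.mem_univ m), card_univ, Fintype.card_fin]
    rw [hcards, Nat.cast_sub hn1]
    push_cast
    ring
  have hsq : ∑ ω : Fin n → Equiv.Perm (Fin r), (∑ i, Af r (ω i) (ω m)) ^ 2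
      = (r.factorial : ℝ) ^ n * ((r : ℝ) * ((r : ℝ) ^ 2 - 1) / 12) ^ 2
        + ((n : ℝ) - 1) * ((r.factorial : ℝ) ^ (n - 2)
        * ((r : ℝ) * ((r.factorial : ℝ) * ((r : ℝ) ^ 2 - 1) / 12) ^ 2
          + (r : ℝ) * ((r : ℝ) - 1) * ((r.factorial : ℝ) * ((r : ℝ) + 1) / 12) ^ 2)) := by
    have hterm : ∀ ω : Fin n → Equiv.Perm (Fin r),
        (∑ i, Af r (ω i) (ω m)) ^ 2
        = ((r : ℝ) * ((r : ℝ) ^ 2 - 1) / 12) ^ 2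
          + (2 * ((r : ℝ) * ((r : ℝ) ^ 2 - 1) / 12)) * (∑ i ∈ s, Af r (ω i) (ω m))
          + (∑ i ∈ s, Af r (ω i) (ω m)) * (∑ i' ∈ s, Af r (ω i') (ω m)) := by
      intro ω
      rw [hBsplit ω]
      ring
    rw [Finset.sum_congr rfl fun ω _ => hterm ω, Finset.sum_add_distrib,
      Finset.sum_add_distrib, e1, e2, e3, add_zero]
  rw [hsq]
  -- final arithmetic
  have hF0 : (r.factorial : ℝ) ≠ 0 := by
    exact_mod_cast Nat.factorial_ne_zero r
  have hFn : (r.factorial : ℝ) ^ n = (r.factorial : ℝ) ^ (n - 2) * (r.factorial : ℝ) ^ 2 := by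
    rw [← pow_add]
    congr 1
    omega
  have hr0 : (r : ℝ) ≠ 0 := by positivity
  have hr10 : (r : ℝ) + 1 ≠ 0 := by positivity
  have hn0 : (n : ℝ) ≠ 0 := by positivity
  have hFn20 : (r.factorial : ℝ) ^ (n - 2) ≠ 0 := pow_ne_zero _ hF0
  rw [hFn]
  field_simp
  ring

lemma Tm_bound (n r : ℕ) (hn : 2 ≤ n) (hr : 2 ≤ r) :
    (r : ℝ) * ((r : ℝ) ^ 2 - 1) / 12 * (1 + ((r : ℝ) - 2) / (n : ℝ))
      ≤ (r : ℝ) ^ 3 / 12 * (1 + (r : ℝ) / (n : ℝ)) := by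
  have hrn : (2:ℝ) ≤ (r : ℝ) := by exact_mod_cast hr
  have hnn : (2:ℝ) ≤ (n : ℝ) := by exact_mod_cast hn
  have hnpos : (0:ℝ) < (n : ℝ) := by linarith
  have hn0 : (n : ℝ) ≠ 0 := ne_of_gt hnpos
  have expand : (r : ℝ) ^ 3 / 12 * (1 + (r : ℝ) / (n : ℝ))
      - (r : ℝ) * ((r : ℝ) ^ 2 - 1) / 12 * (1 + ((r : ℝ) - 2) / (n : ℝ))
      = (2 * (r : ℝ) ^ 3 + (r : ℝ) * (n : ℝ) + (r : ℝ) ^ 2 - 2 * (r : ℝ)) / (12 * (n : ℝ)) := by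
    field_simp
    ring
  have hnum : (0:ℝ) ≤ 2 * (r : ℝ) ^ 3 + (r : ℝ) * (n : ℝ) + (r : ℝ) ^ 2 - 2 * (r : ℝ) := by
    nlinarith
  have := div_nonneg hnum (by linarith : (0:ℝ) ≤ 12 * (n : ℝ))
  linarith [expand ▸ this]

end Main


end AuxGR

/-- **Lemma 3.3, (3.2) (Gaunt–Reinert).** For `n, r ≥ 2` and `T_m = ∑_{l=1}^r S_l ρ_m(l)`,
`E[T_m²] = (r(r²−1)/12)(1 + (r−2)/n)`, and in particular `E[T_m²] ≤ (r³/12)(1 + r/n)`. -/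
theorem Tm_second_moment (n r : ℕ) (hn : 2 ≤ n) (hr : 2 ≤ r) (m : Fin n) :
    (∫ ω, (∑ l, Sstat n r l ω * rho n r m l ω) ^ 2 ∂(friedmanMeasure n r)
      = (r : ℝ) * ((r : ℝ) ^ 2 - 1) / 12 * (1 + ((r : ℝ) - 2) / (n : ℝ))) ∧
    ∫ ω, (∑ l, Sstat n r l ω * rho n r m l ω) ^ 2 ∂(friedmanMeasure n r)
      ≤ (r : ℝ) ^ 3 / 12 * (1 + (r : ℝ) / (n : ℝ)) := by
  have hmain := Tm_second_moment_eq n r hn hr m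
  refine ⟨hmain, ?_⟩
  rw [hmain]
  exact Tm_bound n r hn hr
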